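/- Let H ⊆ G ⊆ S_n with [G : H] = n, let g₁,...,gₙ be right coset representatives of H in G, and let z ∈ Z(H) be such that G is generated by g₁⁻¹ z g₁,...,gₙ⁻¹ z gₙ. Then the operation Hg_i ▷ Hg_j := Hg_i g_j⁻¹ z g_j is well-defined on H\G and makes H\G a connected quandle with n elements. -/

import Mathlib

universe u

/-- A quandle with a *right* self-distributive operation `x ▷ y`, following
Ehrman–Gurpinar–Thibault–Yetter. -/
class RQuandle (Q : Type u) where
  act : Q → Q → Q
  act_self : ∀ x : Q, act x x = x
  act_rinv : ∀ a b : Q, ∃! y, act y a = b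
  act_distrib : ∀ a b c : Q, act (act a b) c = act (act a c) (act b c)

infixl:65 " ▷ " => RQuandle.act

namespace RQuandle

variable {Q : Type u} [RQuandle Q]

/-- The inner automorphism `S_y : x ↦ x ▷ y`, as a permutation of `Q`. -/
noncomputable def SPerm (y : Q) : Equiv.Perm Q :=
  Equiv.ofBijective (fun x => x ▷ y)
    ⟨fun a b h => by
        obtain ⟨c, _, hu⟩ := RQuandle.act_rinv y (b ▷ y)
        exact (hu a h).trans (hu b rfl).symm,
      fun b => (RQuandle.act_rinv y b).exists⟩

@[simp] lemma SPerm_apply (x y : Q) : SPerm y x = x ▷ y := rfl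

/-- The inner automorphism group of a quandle: the subgroup of `Equiv.Perm Q`
generated by the maps `S_y`. -/
def Inn (Q : Type u) [RQuandle Q] : Subgroup (Equiv.Perm Q) :=
  Subgroup.closure (Set.range (SPerm : Q → Equiv.Perm Q))

lemma SPerm_mem_Inn (y : Q) : SPerm y ∈ Inn Q :=
  Subgroup.subset_closure ⟨y, rfl⟩

/-- A quandle is (algebraically) connected when `Inn Q` acts transitively. -/
def Connected (Q : Type u) [RQuandle Q] : Prop :=
  ∀ x y : Q, ∃ p ∈ Inn Q, p x = y

/-- The orbit of `s` under the inner automorphism group. -/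
def orbitSet (s : Q) : Set Q := {t | ∃ p ∈ Inn Q, p s = t}

/-- `f` is an automorphism of the quandle `Q`. -/
def IsQAut (f : Equiv.Perm Q) : Prop := ∀ x y : Q, f (x ▷ y) = f x ▷ f y

/-- Key conjugation identity: in left-to-right (right action) convention this is
`S_{x ▷ y} = S_y⁻¹ S_x S_y`. -/
lemma SPerm_conj (x y : Q) : SPerm (x ▷ y) = SPerm y * SPerm x * (SPerm y)⁻¹ := by
  rw [eq_mul_inv_iff_mul_eq]
  ext u
  simp only [Equiv.Perm.mul_apply, SPerm_apply]
  exact (RQuandle.act_distrib u x y).symm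

/-- Relators for the universal augmentation group `Γ_Q`: `|x ▷ y| = |y|⁻¹ |x| |y|`. -/
def augRels (Q : Type u) [RQuandle Q] : Set (FreeGroup Q) :=
  {w | ∃ x y : Q,
    w = FreeGroup.of (x ▷ y) * ((FreeGroup.of y)⁻¹ * FreeGroup.of x * FreeGroup.of y)⁻¹}

/-- The universal augmentation group `Γ_Q` of a quandle. -/
abbrev Gamma (Q : Type u) [RQuandle Q] := PresentedGroup (augRels Q)

/-- The generator `|x| ∈ Γ_Q`. -/
def gen (x : Q) : Gamma Q := PresentedGroup.of x

/-- The canonical homomorphism `Γ_Q → Aut(Q)` sending `|y|` to `S_y`.  Since the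
paper composes automorphisms as right actions, this is a homomorphism into the
opposite of the permutation group. -/
noncomputable def canHom (Q : Type u) [RQuandle Q] : Gamma Q →* (Equiv.Perm Q)ᵐᵒᵖ :=
  PresentedGroup.toGroup (f := fun y => MulOpposite.op (SPerm y)) (by
    rintro w ⟨x, y, rfl⟩
    simp only [map_mul, map_inv, FreeGroup.lift_apply_of]
    rw [← MulOpposite.op_inv, ← MulOpposite.op_mul, ← MulOpposite.op_mul, SPerm_conj]
    simp [mul_assoc])

@[simp] lemma canHom_gen (y : Q) : canHom Q (gen y) = MulOpposite.op (SPerm y) :=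
  PresentedGroup.toGroup.of _

lemma orbit_act_mem {s x : Q} (y : Q) (hx : x ∈ orbitSet s) : x ▷ y ∈ orbitSet s := by
  obtain ⟨p, hp, rfl⟩ := hx
  exact ⟨SPerm y * p, mul_mem (SPerm_mem_Inn y) hp, rfl⟩

lemma orbit_actinv_mem {s x : Q} (y : Q) (hx : x ∈ orbitSet s) :
    (SPerm y).symm x ∈ orbitSet s := by
  obtain ⟨p, hp, rfl⟩ := hx
  exact ⟨(SPerm y)⁻¹ * p, mul_mem (inv_mem (SPerm_mem_Inn y)) hp, rfl⟩

lemma orbit_mem_iff (t : Q) (y : Q) {u : Q} :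
    u ∈ orbitSet t ↔ u ▷ y ∈ orbitSet t := by
  constructor
  · exact fun h => orbit_act_mem y h
  · intro h
    have := orbit_actinv_mem y h
    rw [← SPerm_apply u y, Equiv.symm_apply_apply] at this
    exact this

/-- Each orbit of `Inn Q` is a subquandle. -/
instance orbitQuandle (s : Q) : RQuandle (orbitSet s) where
  act a b := ⟨a.1 ▷ b.1, orbit_act_mem b.1 a.2⟩
  act_self a := Subtype.ext (RQuandle.act_self a.1)
  act_rinv a b := by
    refine ⟨⟨(SPerm a.1).symm b.1, orbit_actinv_mem a.1 b.2⟩, Subtype.ext ?_, ?_⟩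
    · exact (SPerm a.1).apply_symm_apply b.1
    · rintro ⟨z, hz⟩ h
      apply Subtype.ext
      have hz' : z ▷ a.1 = b.1 := congrArg Subtype.val h
      show z = (SPerm a.1).symm b.1
      rw [← hz']
      exact ((SPerm a.1).symm_apply_apply z).symm
  act_distrib a b c := Subtype.ext (RQuandle.act_distrib a.1 b.1 c.1)

/-- Restriction of `S_x` to the orbit of `t`. -/
noncomputable def phi (t : Q) (x : Q) : Equiv.Perm (orbitSet t) :=
  (SPerm x).subtypePerm (fun u => (orbit_mem_iff t x (u := u)).symm)

/-- The quandle axioms, as a predicate on a binary operation. -/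
def IsRQuandleOp {A : Type u} (op : A → A → A) : Prop :=
  (∀ x, op x x = x) ∧ (∀ a b, ∃! y, op y a = b) ∧
    ∀ a b c, op (op a b) c = op (op a c) (op b c)

end RQuandle


open RQuandle in
/-- given `H ⊆ G ⊆ S_n` with `[G : H] = n` and `z ∈ Z(H)` such that
`G` is generated by the conjugates `g⁻¹ z g` (which depend only on the right
coset `Hg`), the operation `Hgᵢ ▷ Hgⱼ = Hgᵢ gⱼ⁻¹ z gⱼ` is well defined on `H\G`
and makes it a connected quandle with `n` elements.  Connectedness is expressed
by saying that any two elements are related by the equivalence relation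
generated by `a ∼ a ▷ c`. -/
theorem coset_quandle_construction {n : ℕ} (G H : Subgroup (Equiv.Perm (Fin n)))
    (hHG : H ≤ G) (hindex : (H.subgroupOf G).index = n)
    (z : Equiv.Perm (Fin n)) (hzH : z ∈ H) (hzc : ∀ k ∈ H, k * z = z * k)
    (hgen : Subgroup.closure
      {x : ↥G | ∃ g : ↥G, x = g⁻¹ * (⟨z, hHG hzH⟩ : ↥G) * g} = ⊤) :
    ∃ op : Quotient (QuotientGroup.rightRel (H.subgroupOf G)) →
        Quotient (QuotientGroup.rightRel (H.subgroupOf G)) →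
        Quotient (QuotientGroup.rightRel (H.subgroupOf G)),
      (∀ a b : ↥G, op (Quotient.mk'' a) (Quotient.mk'' b) =
          Quotient.mk'' (a * b⁻¹ * (⟨z, hHG hzH⟩ : ↥G) * b)) ∧
      IsRQuandleOp op ∧
      (∀ X Y : Quotient (QuotientGroup.rightRel (H.subgroupOf G)),
        Relation.EqvGen (fun A B => ∃ C, op A C = B) X Y) ∧
      Nat.card (Quotient (QuotientGroup.rightRel (H.subgroupOf G))) = n := by
  classical
  set S := H.subgroupOf G with hS
  set zG : ↥G := (⟨z, hHG hzH⟩ : ↥G) with hzG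
  have hzS : zG ∈ S := hzH
  have hzcS : ∀ k ∈ S, k * zG = zG * k := by
    intro k hk
    exact Subtype.ext (hzc k.1 hk)
  set f : ↥G → ↥G := fun b => b⁻¹ * zG * b with hf
  have hff : ∀ b b' : ↥G, (QuotientGroup.rightRel S) b b' → f b = f b' := by
    intro b b' hbb'
    rw [QuotientGroup.rightRel_apply] at hbb'
    have h1 : b' = (b' * b⁻¹) * b := by group
    have h2 := hzcS _ hbb'
    simp only [hf]
    rw [h1]
    have : (b' * b⁻¹)⁻¹ * zG * (b' * b⁻¹) = zG := by
      rw [mul_assoc, ← h2]; group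
    calc b⁻¹ * zG * b = b⁻¹ * ((b' * b⁻¹)⁻¹ * zG * (b' * b⁻¹)) * b := by rw [this]
    _ = ((b' * b⁻¹) * b)⁻¹ * zG * ((b' * b⁻¹) * b) := by group
  set op : Quotient (QuotientGroup.rightRel S) → Quotient (QuotientGroup.rightRel S) →
      Quotient (QuotientGroup.rightRel S) :=
    Quotient.map₂' (fun a b => a * f b) (by
      intro a a' haa' b b' hbb'
      rw [QuotientGroup.rightRel_apply] at haa'
      show (QuotientGroup.rightRel S) (a * f b) (a' * f b')
      rw [QuotientGroup.rightRel_apply, ← hff b b' hbb']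
      have : a' * f b * (a * f b)⁻¹ = a' * a⁻¹ := by group
      rw [this]; exact haa') with hop
  have opmk : ∀ a b : ↥G, op (Quotient.mk'' a) (Quotient.mk'' b) = Quotient.mk'' (a * f b) :=
    fun a b => rfl
  have hmkeq : ∀ a b : ↥G, (Quotient.mk'' a : Quotient (QuotientGroup.rightRel S)) =
      Quotient.mk'' b ↔ b * a⁻¹ ∈ S := by
    intro a b
    rw [Quotient.eq'']
    exact QuotientGroup.rightRel_apply
  refine ⟨op, ?_, ⟨?_, ?_, ?_⟩, ?_, ?_⟩
  · intro a b
    rw [opmk]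
    have h : a * f b = a * b⁻¹ * zG * b := by simp only [hf]; group
    rw [h]
  · -- idempotent
    intro x
    induction x using Quotient.inductionOn' with
    | h a =>
      rw [opmk, hmkeq]
      have : a * (a * f a)⁻¹ = zG⁻¹ := by simp only [hf]; group
      rw [this]
      exact inv_mem hzS
  · -- right inverse
    intro a b
    induction a using Quotient.inductionOn' with
    | h a =>
      induction b using Quotient.inductionOn' with
      | h b =>
        refine ⟨Quotient.mk'' (b * (f a)⁻¹), ?_, ?_⟩
        · show op (Quotient.mk'' (b * (f a)⁻¹)) (Quotient.mk'' a) = Quotient.mk'' b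
          rw [opmk, hmkeq]
          have h : b * (b * (f a)⁻¹ * f a)⁻¹ = 1 := by group
          rw [h]
          exact one_mem S
        · intro y hy
          induction y using Quotient.inductionOn' with
          | h y =>
            rw [opmk, hmkeq] at hy
            rw [hmkeq]
            have : b * (f a)⁻¹ * y⁻¹ = b * (y * f a)⁻¹ := by group
            rw [this]; exact hy
  · -- distributivity
    intro a b c
    induction a using Quotient.inductionOn' with
    | h a =>
      induction b using Quotient.inductionOn' with
      | h b =>
        induction c using Quotient.inductionOn' with
        | h c =>
          simp only [opmk]
          congr 1
          simp only [hf]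
          group
  · -- connectedness
    set R : Quotient (QuotientGroup.rightRel S) → Quotient (QuotientGroup.rightRel S) → Prop :=
      fun A B => ∃ C, op A C = B with hR
    have key : ∀ g ∈ Subgroup.closure {x : ↥G | ∃ c : ↥G, x = c⁻¹ * zG * c},
        ∀ a : ↥G, Relation.EqvGen R (Quotient.mk'' a) (Quotient.mk'' (a * g)) := by
      intro g hg
      induction hg using Subgroup.closure_induction with
      | mem x hx =>
        intro a
        obtain ⟨c, rfl⟩ := hx
        exact Relation.EqvGen.rel _ _ ⟨Quotient.mk'' c, (opmk a c).trans (by rw [hf])⟩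
      | one =>
        intro a
        rw [mul_one]
        exact Relation.EqvGen.refl _
      | mul x y hx hy ihx ihy =>
        intro a
        refine Relation.EqvGen.trans _ _ _ (ihx a) ?_
        rw [← mul_assoc]
        exact ihy (a * x)
      | inv x hx ih =>
        intro a
        have := ih (a * x⁻¹)
        rw [inv_mul_cancel_right] at this
        exact Relation.EqvGen.symm _ _ this
    intro X Y
    induction X using Quotient.inductionOn' with
    | h x =>
      induction Y using Quotient.inductionOn' with
      | h y =>
        have hmem : x⁻¹ * y ∈ Subgroup.closure {x : ↥G | ∃ c : ↥G, x = c⁻¹ * zG * c} := by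
          rw [hgen]; trivial
        have := key _ hmem x
        rwa [mul_inv_cancel_left] at this
  · -- cardinality
    rw [Nat.card_congr (QuotientGroup.quotientRightRelEquivQuotientLeftRel S)]
    exact hindex
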